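/- If a graph G contains a nonempty (k+1,s)-edge-hide-out S, then the robber has a winning escape strategy against every cop strategy of cost at most k in the edge-blocking cops-and-robber game with robber speed s; hence cc_s(G) ≥ k+1. -/

import Mathlib

/-- A walk in a multigraph given by its endpoint function `ends`:
`IsWalk ends u w l` means `l` is the list of edges of a walk from `u` to `w`. -/
inductive IsWalk {V E : Type*} (ends : E → Sym2 V) : V → V → List E → Prop
  | nil (v : V) : IsWalk ends v v []
  | cons {u v w : V} {e : E} {l : List E} :
      ends e = s(u, v) → IsWalk ends v w l → IsWalk ends u w (e :: l)

/-- `EdgeSep ends s x S A` : the edge set `A` meets every walk of length at most `s`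
from `x` to a vertex of `S`. -/
def EdgeSep {V E : Type*} (ends : E → Sym2 V) (s : ℕ∞) (x : V) (S : Set V) (A : Set E) : Prop :=
  ∀ y ∈ S, ∀ l : List E, IsWalk ends x y l → (l.length : ℕ∞) ≤ s → ∃ e ∈ l, e ∈ A

/-- A `(k,s)`-edge-hide-out: every edge set separating a vertex `x ∈ R` from `R \ {x}`
(at distance `s`) has at least `k` edges. -/
def IsHideout {V E : Type*} (ends : E → Sym2 V) (s : ℕ∞) (k : ℕ) (R : Set V) : Prop :=
  ∀ x ∈ R, ∀ A : Set E, EdgeSep ends s x (R \ {x}) A → k ≤ A.ncard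

/-- `G` admits a layout of `s`-edge-degeneracy at most `k`. -/
def LayoutWidthLE {V E : Type*} (ends : E → Sym2 V) (s : ℕ∞) (k : ℕ) : Prop :=
  ∃ (n : ℕ) (L : Fin n ≃ V), ∀ i : Fin n,
    ∃ A : Set E, A.ncard ≤ k ∧ EdgeSep ends s (L i) {v | ∃ j, j < i ∧ L j = v} A

/-- The `s`-edge-degeneracy `δ_e^s(G)`. -/
noncomputable def edgeDeg {V E : Type*} (ends : E → Sym2 V) (s : ℕ∞) : ℕ :=
  sInf {k | LayoutWidthLE ends s k}

/-- The edge-degree of a vertex (parallel edges counted with multiplicity). -/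
noncomputable def degE {V E : Type*} (ends : E → Sym2 V) (v : V) : ℕ :=
  {e : E | v ∈ ends e}.ncard

/-- `Reach ends s F u w` : there is a walk of length at most `s` from `u` to `w`
avoiding all blocked edges in `F`. -/
def Reach {V E : Type*} (ends : E → Sym2 V) (s : ℕ∞) (F : Set E) (u w : V) : Prop :=
  ∃ l : List E, IsWalk ends u w l ∧ (∀ e ∈ l, e ∉ F) ∧ (l.length : ℕ∞) ≤ s

/-- A valid robber strategy: when the robber can move to another vertex along an unblocked
path of length at most `s`, he does so; otherwise he stays put (and is captured). -/
def ValidRobber {V E : Type*} (ends : E → Sym2 V) (s : ℕ∞) (g : Set E → V → V) : Prop :=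
  ∀ (F : Set E) (v : V),
    ((∃ u, u ≠ v ∧ Reach ends s F v u) → (g F v ≠ v ∧ Reach ends s F v (g F v))) ∧
    ((¬ ∃ u, u ≠ v ∧ Reach ends s F v u) → g F v = v)

/-- The game scenario generated by the cop strategy `f` and the robber strategy `(v₀, g)`:
`scenario f g v₀ i` is the robber's position after round `i`. -/
def scenario {V E : Type*} (f : V → Set E) (g : Set E → V → V) (v₀ : V) : ℕ → V
  | 0 => v₀
  | i + 1 => g (f (scenario f g v₀ i)) (scenario f g v₀ i)

/-- The capture cost `cc_s(G)` against a robber of speed `s`: the least `k` such that some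
cop strategy of cost at most `k` captures every valid robber. -/
noncomputable def captureCost {V E : Type*} (ends : E → Sym2 V) (s : ℕ∞) : ℕ :=
  sInf {k | ∃ f : V → Set E, (∀ v, (f v).ncard ≤ k) ∧
    ∀ (v₀ : V) (g : Set E → V → V), ValidRobber ends s g →
      ∃ i, scenario f g v₀ (i + 1) = scenario f g v₀ i}

/-- if `G` contains a nonempty `(k+1,s)`-edge-hide-out then, against every cop
strategy of cost at most `k`, the robber has a valid escape strategy that is never captured;
hence `cc_s(G) ≥ k+1`. -/
theorem robber_wins_of_hideout {V E : Type*} [Finite V] [Finite E]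
    (ends : E → Sym2 V) (hloopless : ∀ e, ¬ (ends e).IsDiag)
    (s : ℕ∞) (hs : 1 ≤ s) (k : ℕ)
    (S : Set V) (hSne : S.Nonempty) (hS : IsHideout ends s (k + 1) S) :
    (∀ f : V → Set E, (∀ v, (f v).ncard ≤ k) →
      ∃ (v₀ : V) (g : Set E → V → V), ValidRobber ends s g ∧
        ∀ i, scenario f g v₀ (i + 1) ≠ scenario f g v₀ i) ∧
    k + 1 ≤ captureCost ends s := by
  classical
  -- Key escape lemma: from any vertex of S, against any small edge set, the robber
  -- can reach another vertex of S.
  have escape : ∀ v ∈ S, ∀ F : Set E, F.ncard ≤ k →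
      ∃ u, u ∈ S ∧ u ≠ v ∧ Reach ends s F v u := by
    intro v hv F hF
    by_contra h
    push_neg at h
    have hsep : EdgeSep ends s v (S \ {v}) F := by
      intro y hy l hl hlen
      by_contra he
      push_neg at he
      exact h y hy.1 hy.2 ⟨l, hl, he, hlen⟩
    have := hS v hv F hsep
    omega
  have main : ∀ f : V → Set E, (∀ v, (f v).ncard ≤ k) →
      ∃ (v₀ : V) (g : Set E → V → V), ValidRobber ends s g ∧
        ∀ i, scenario f g v₀ (i + 1) ≠ scenario f g v₀ i := by
    intro f hf
    obtain ⟨v₀, hv₀⟩ := hSne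
    set g : Set E → V → V := fun F v =>
      if h : ∃ u, u ∈ S ∧ u ≠ v ∧ Reach ends s F v u then h.choose
      else if h2 : ∃ u, u ≠ v ∧ Reach ends s F v u then h2.choose else v with hg
    have hgS : ∀ F v, (∃ u, u ∈ S ∧ u ≠ v ∧ Reach ends s F v u) →
        g F v ∈ S ∧ g F v ≠ v ∧ Reach ends s F v (g F v) := by
      intro F v h
      simp only [hg, dif_pos h]
      exact h.choose_spec
    have hvalid : ValidRobber ends s g := by
      intro F v
      constructor
      · intro h
        by_cases h1 : ∃ u, u ∈ S ∧ u ≠ v ∧ Reach ends s F v u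
        · exact (hgS F v h1).2
        · simp only [hg, dif_neg h1, dif_pos h]
          exact h.choose_spec
      · intro h
        have h1 : ¬ ∃ u, u ∈ S ∧ u ≠ v ∧ Reach ends s F v u := by
          rintro ⟨u, _, hu⟩; exact h ⟨u, hu⟩
        simp only [hg, dif_neg h1, dif_neg h]
    refine ⟨v₀, g, hvalid, ?_⟩
    have key : ∀ i, scenario f g v₀ i ∈ S ∧
        scenario f g v₀ (i + 1) ≠ scenario f g v₀ i := by
      intro i
      induction i with
      | zero =>
          refine ⟨hv₀, ?_⟩
          have := hgS (f v₀) v₀ (escape v₀ hv₀ (f v₀) (hf v₀))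
          exact this.2.1
      | succ n ih =>
          have hmem : scenario f g v₀ (n + 1) ∈ S := by
            have := hgS (f (scenario f g v₀ n)) (scenario f g v₀ n)
              (escape _ ih.1 _ (hf _))
            exact this.1
          refine ⟨hmem, ?_⟩
          have := hgS (f (scenario f g v₀ (n + 1))) (scenario f g v₀ (n + 1))
            (escape _ hmem _ (hf _))
          exact this.2.1
    exact fun i => (key i).2
  refine ⟨main, ?_⟩
  -- The set defining captureCost is nonempty: blocking all edges wins for the cops.
  have hwin : Nat.card E ∈ {m | ∃ f : V → Set E, (∀ v, (f v).ncard ≤ m) ∧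
      ∀ (v₀ : V) (g : Set E → V → V), ValidRobber ends s g →
        ∃ i, scenario f g v₀ (i + 1) = scenario f g v₀ i} := by
    refine ⟨fun _ => Set.univ, fun v => le_of_eq (Set.ncard_univ E), ?_⟩
    intro v₀ g hg
    refine ⟨0, ?_⟩
    have : ¬ ∃ u, u ≠ v₀ ∧ Reach ends s Set.univ v₀ u := by
      rintro ⟨u, hu, l, hl, hav, _⟩
      cases hl with
      | nil => exact hu rfl
      | cons he _ => exact hav _ List.mem_cons_self (Set.mem_univ _)
    exact (hg (Set.univ) v₀).2 this
  refine le_csInf ⟨_, hwin⟩ ?_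
  intro m hm
  by_contra hlt
  push_neg at hlt
  obtain ⟨f, hf, hcap⟩ := hm
  have hf' : ∀ v, (f v).ncard ≤ k := fun v => le_trans (hf v) (by omega)
  obtain ⟨v₀, g, hvalid, hesc⟩ := main f hf'
  obtain ⟨i, hi⟩ := hcap v₀ g hvalid
  exact hesc i hi
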